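/- Let K ⊆ L be a purely transcendental field extension and let A and B be nonzero finite-dimensional K-subspaces of L of the same dimension with AB ∩ A = {0} and B = αA for some nonzero α ∈ L. Then the multiplication-by-α map w_α : A → B, w_α(a) = αa, is an acyclic matching from A to B: w_α is a strong matching, and every strong matching h : A → B equivalent to w_α satisfies h = c·w_α for some constant c ∈ K. -/

import Mathlib

set_option maxHeartbeats 1000000
set_option synthInstance.maxHeartbeats 400000

lemma aux_fin_alg (K : Type*) [Field K] : ∀ (n : ℕ) (p : MvPolynomial (Fin n) K),
    IsAlgebraic K p → ∃ k : K, algebraMap K (MvPolynomial (Fin n) K) k = p := by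
  intro n
  induction n with
  | zero =>
    intro p _
    obtain ⟨k, hk⟩ := MvPolynomial.C_surjective (Fin 0) p
    exact ⟨k, hk⟩
  | succ n ih =>
    intro p hp
    set e := MvPolynomial.finSuccEquiv K n with he
    have hq : IsAlgebraic K (e p) := hp.algHom e.toAlgHom
    have hq' : IsAlgebraic (MvPolynomial (Fin n) K) (e p) :=
      hq.extendScalars (algebraMap K (MvPolynomial (Fin n) K)).injective
    have hdeg : (e p).natDegree = 0 := by
      by_contra hd
      have hne : (e p) ≠ 0 := fun h0 => hd (by simp [h0])
      exact Polynomial.transcendental (e p) hd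
        (mem_nonZeroDivisors_of_ne_zero (Polynomial.leadingCoeff_ne_zero.mpr hne)) hq'
    obtain ⟨r, hr⟩ := Polynomial.natDegree_eq_zero.mp hdeg
    have hralg : IsAlgebraic K r := by
      have := hr ▸ hq
      exact (isAlgebraic_algHom_iff (Polynomial.CAlgHom (R := K))
        (Polynomial.C_injective)).mp this
    obtain ⟨k, hk⟩ := ih r hralg
    refine ⟨k, e.injective ?_⟩
    rw [AlgEquiv.commutes, Polynomial.algebraMap_apply, hk, hr]

lemma aux_mv_alg {K : Type*} [Field K] {σ : Type*} (p : MvPolynomial σ K)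
    (hp : IsAlgebraic K p) : ∃ k : K, algebraMap K (MvPolynomial σ K) k = p := by
  obtain ⟨n, f, hf, q, rfl⟩ := MvPolynomial.exists_fin_rename p
  have hq : IsAlgebraic K q :=
    (isAlgebraic_algHom_iff (MvPolynomial.rename f) (MvPolynomial.rename_injective f hf)).mp hp
  obtain ⟨k, hk⟩ := aux_fin_alg K n q hq
  exact ⟨k, by rw [← hk, AlgHom.commutes]⟩

/-- A field extension `K ⊆ L` is purely transcendental if `L` is generated, as a field
extension of `K`, by an algebraically independent set. -/
def IsPurelyTranscendental (K L : Type*) [Field K] [Field L] [Algebra K L] : Prop :=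
  ∃ S : Set L, AlgebraicIndependent K ((↑) : S → L) ∧ IntermediateField.adjoin K S = ⊤

/-- An ordered basis `v` of a `K`-subspace `A` of `L` is matched to an ordered basis `w`
of a `K`-subspace `B` of `L` if for each `i`, `(v i)⁻¹ • A ∩ B` is contained in the
`K`-span of `{w j : j ≠ i}`. -/
def MatchedBases {K L : Type*} [Field K] [Field L] [Algebra K L]
    {A B : Submodule K L} {n : ℕ} (v : Module.Basis (Fin n) K A) (w : Module.Basis (Fin n) K B) : Prop :=
  ∀ i : Fin n, ∀ y : L, y ∈ B → (∃ x ∈ A, y = ((v i : L))⁻¹ * x) →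
    y ∈ Submodule.span K ((fun j : Fin n => (w j : L)) '' {j : Fin n | j ≠ i})

/-- A strong matching from `A` to `B` is a `K`-linear isomorphism `f : A → B` such that
every ordered basis `v` of `A` is matched to the ordered basis `f (v)` of `B`. -/
def IsStrongMatching {K L : Type*} [Field K] [Field L] [Algebra K L]
    {A B : Submodule K L} (f : A ≃ₗ[K] B) : Prop :=
  ∀ v : Module.Basis (Fin (Module.finrank K A)) K A, MatchedBases v (v.map f)

/-- Two `K`-linear isomorphisms `f, g : A → B` are equivalent if there is a `K`-linear
automorphism `φ : A → A` with `a * f a = φ a * g (φ a)` for all `a ∈ A`. -/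
def AreEquivalent {K L : Type*} [Field K] [Field L] [Algebra K L]
    {A B : Submodule K L} (f g : A ≃ₗ[K] B) : Prop :=
  ∃ φ : A ≃ₗ[K] A, ∀ a : A, (a : L) * ((f a : ↥B) : L) =
    ((φ a : ↥A) : L) * ((g (φ a) : ↥B) : L)

lemma aux_pt_alg {K L : Type*} [Field K] [Field L] [Algebra K L]
    (hKL : IsPurelyTranscendental K L) {c : L} (hc : IsAlgebraic K c) :
    ∃ k : K, algebraMap K L k = c := by
  obtain ⟨S, hS, hTop⟩ := hKL
  have hrange : Set.range ((↑) : S → L) = S := Subtype.range_coe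
  let E : FractionRing (MvPolynomial S K) ≃ₐ[K] L :=
    hS.aevalEquivField.trans
      ((IntermediateField.equivOfEq (by rw [hrange, hTop])).trans IntermediateField.topEquiv)
  set d := E.symm c with hd
  have hdalg : IsAlgebraic K d := hc.algHom E.symm.toAlgHom
  have hdint : IsIntegral (MvPolynomial S K) d :=
    (isAlgebraic_iff_isIntegral.mp hdalg).tower_top
  obtain ⟨p, hp⟩ := IsIntegrallyClosed.isIntegral_iff.mp hdint
  have hpalg : IsAlgebraic K p := by
    refine (isAlgebraic_algHom_iff
      (IsScalarTower.toAlgHom K (MvPolynomial S K) (FractionRing (MvPolynomial S K)))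
      (IsFractionRing.injective _ _)).mp ?_
    simpa [IsScalarTower.coe_toAlgHom', hp] using hdalg
  obtain ⟨k, hk⟩ := aux_mv_alg p hpalg
  refine ⟨k, ?_⟩
  have hkd : algebraMap K (FractionRing (MvPolynomial S K)) k = d := by
    rw [IsScalarTower.algebraMap_apply K (MvPolynomial S K), hk, hp]
  calc algebraMap K L k = E (algebraMap K _ k) := (E.commutes k).symm
    _ = E d := by rw [hkd]
    _ = c := by rw [hd, AlgEquiv.apply_symm_apply]

/-- Let `K ⊆ L` be purely transcendental, `A`, `B` nonzero finite-dimensional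
`K`-subspaces of `L` of the same dimension with `AB ∩ A = {0}` and `B = α • A` for some
nonzero `α ∈ L`. Then the multiplication-by-`α` map `w : A → B` is an acyclic matching:
it is a strong matching, and every strong matching `h : A → B` equivalent to `w`
satisfies `h = c • w` for some `c ∈ K`. -/
theorem stmt16 {K L : Type*} [Field K] [Field L] [Algebra K L]
    (hKL : IsPurelyTranscendental K L)
    (A B : Submodule K L) (hA : A ≠ ⊥) (hB : B ≠ ⊥)
    [FiniteDimensional K A] [FiniteDimensional K B]
    (hdim : Module.finrank K A = Module.finrank K B)
    (hAB : ∀ x : L, (∃ a ∈ A, ∃ b ∈ B, x = a * b) → x ∈ A → x = 0)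
    (α : L) (hα : α ≠ 0) (hBα : (B : Set L) = (α * ·) '' (A : Set L)) :
    ∃ w : A ≃ₗ[K] B, (∀ a : A, ((w a : ↥B) : L) = α * (a : L)) ∧
      IsStrongMatching w ∧
      ∀ h : A ≃ₗ[K] B, IsStrongMatching h → AreEquivalent h w →
        ∃ c : K, ∀ a : A, ((h a : ↥B) : L) = algebraMap K L c * ((w a : ↥B) : L) := by
  classical
  have hmemB : ∀ x : L, x ∈ A → α * x ∈ B := fun x hx => by
    have : α * x ∈ (B : Set L) := by rw [hBα]; exact ⟨x, hx, rfl⟩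
    exact this
  have hmemA : ∀ x : L, x ∈ B → α⁻¹ * x ∈ A := fun x hx => by
    have hx' : x ∈ (α * ·) '' (A : Set L) := by rw [← hBα]; exact hx
    obtain ⟨a, ha, rfl⟩ := hx'
    simpa [← mul_assoc, inv_mul_cancel₀ hα] using ha
  let w : A ≃ₗ[K] B :=
    { toFun := fun a => ⟨α * a, hmemB a a.2⟩
      map_add' := fun a b => by ext; simp [mul_add]
      map_smul' := fun k a => by ext; simp [Algebra.mul_smul_comm]
      invFun := fun b => ⟨α⁻¹ * b, hmemA b b.2⟩
      left_inv := fun a => by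
        ext; simp only; rw [← mul_assoc, inv_mul_cancel₀ hα, one_mul]
      right_inv := fun b => by
        ext; simp only; rw [← mul_assoc, mul_inv_cancel₀ hα, one_mul] }
  have hw : ∀ a : A, ((w a : ↥B) : L) = α * (a : L) := fun a => rfl
  -- every linear isomorphism is a strong matching, thanks to hAB
  have strong : ∀ f : A ≃ₗ[K] B, IsStrongMatching f := by
    intro f v i y hyB hy
    obtain ⟨x, hxA, hyx⟩ := hy
    have hvi : ((v i : A) : L) ≠ 0 := fun h0 => v.ne_zero i (Subtype.ext h0)
    have hxy : x = ((v i : A) : L) * y := by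
      rw [hyx, ← mul_assoc, mul_inv_cancel₀ hvi, one_mul]
    have hx0 : x = 0 := hAB x ⟨((v i : A) : L), (v i).2, y, hyB, hxy⟩ hxA
    rw [hyx, hx0, mul_zero]
    exact Submodule.zero_mem _
  refine ⟨w, hw, strong w, ?_⟩
  intro h _ hequiv
  obtain ⟨φ, hφ⟩ := hequiv
  set G : A → L := fun a => α⁻¹ * ((h a : ↥B) : L) with hG
  have hHG : ∀ a : A, ((h a : ↥B) : L) = α * G a := by
    intro a
    rw [hG]; simp only
    rw [← mul_assoc, mul_inv_cancel₀ hα, one_mul]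
  have hGmem : ∀ a : A, G a ∈ A := fun a => hmemA _ (h a).2
  have hGadd : ∀ a b : A, G (a + b) = G a + G b := by
    intro a b
    simp only [hG, map_add, Submodule.coe_add, mul_add]
  have key1 : ∀ a : A, (a : L) * G a = ((φ a : ↥A) : L) ^ 2 := by
    intro a
    have h1 := hφ a
    rw [hw (φ a)] at h1
    have h2 : α⁻¹ * ((a : L) * ((h a : ↥B) : L)) =
        α⁻¹ * (((φ a : ↥A) : L) * (α * ((φ a : ↥A) : L))) := by rw [h1]
    calc (a : L) * G a = α⁻¹ * ((a : L) * ((h a : ↥B) : L)) := by rw [hG]; ring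
      _ = α⁻¹ * (((φ a : ↥A) : L) * (α * ((φ a : ↥A) : L))) := h2
      _ = α⁻¹ * α * ((φ a : ↥A) : L) ^ 2 := by ring
      _ = ((φ a : ↥A) : L) ^ 2 := by rw [inv_mul_cancel₀ hα, one_mul]
  have key2 : ∀ a b : A, (a : L) * G b + (b : L) * G a =
      2 * (((φ a : ↥A) : L) * ((φ b : ↥A) : L)) := by
    intro a b
    have e3 := key1 (a + b)
    rw [hGadd] at e3
    have hco : ((a + b : A) : L) = (a : L) + (b : L) := rfl
    have hP : ((φ (a + b) : ↥A) : L) = ((φ a : ↥A) : L) + ((φ b : ↥A) : L) := by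
      rw [map_add]; rfl
    rw [hco, hP] at e3
    linear_combination e3 - key1 a - key1 b
  have key3 : ∀ a b : A, (a : L) * G b = (b : L) * G a := by
    intro a b
    have sq0 : ((a : L) * G b - (b : L) * G a) ^ 2 = 0 := by
      linear_combination ((a : L) * G b + (b : L) * G a +
          2 * (((φ a : ↥A) : L) * ((φ b : ↥A) : L))) * key2 a b
        - 4 * ((b : L) * G b) * key1 a - 4 * (((φ a : ↥A) : L) ^ 2) * key1 b
    exact sub_eq_zero.mp (sq_eq_zero_iff.mp sq0)
  obtain ⟨x₀, hx₀A, hx₀⟩ := (Submodule.ne_bot_iff A).mp hA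
  set a₀ : A := ⟨x₀, hx₀A⟩ with ha₀
  set c' : L := x₀⁻¹ * G a₀ with hc'
  have hGb : ∀ b : A, G b = c' * (b : L) := by
    intro b
    have hk3 : x₀ * G b = (b : L) * G a₀ := key3 a₀ b
    calc G b = x₀⁻¹ * (x₀ * G b) := by rw [← mul_assoc, inv_mul_cancel₀ hx₀, one_mul]
      _ = x₀⁻¹ * ((b : L) * G a₀) := by rw [hk3]
      _ = c' * (b : L) := by rw [hc']; ring
  have hcmem : ∀ b : A, c' * (b : L) ∈ A := fun b => by rw [← hGb b]; exact hGmem b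
  let T : Module.End K A :=
    { toFun := fun b => ⟨c' * (b : L), hcmem b⟩
      map_add' := fun a b => by ext; simp [mul_add]
      map_smul' := fun k b => by ext; simp [Algebra.mul_smul_comm] }
  have hTn : ∀ n : ℕ, (((T ^ n) a₀ : A) : L) = c' ^ n * x₀ := by
    intro n
    induction n with
    | zero => simp [ha₀]
    | succ n ih =>
      rw [pow_succ']
      have hmul : ((T * T ^ n) a₀) = T ((T ^ n) a₀) := rfl
      rw [hmul]
      show c' * (((T ^ n) a₀ : A) : L) = c' ^ (n + 1) * x₀
      rw [ih, pow_succ']; ring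
  have hint : IsIntegral K T := (Algebra.IsIntegral.of_finite K (Module.End K A)).isIntegral T
  obtain ⟨p, hpm, hpT⟩ := hint
  have hpow : ∀ q : Polynomial K,
      (((Polynomial.aeval T q) a₀ : A) : L) = Polynomial.aeval c' q * x₀ := by
    intro q
    induction q using Polynomial.induction_on' with
    | add r s hr hs =>
      rw [map_add, map_add]
      simp only [LinearMap.add_apply, Submodule.coe_add, hr, hs, add_mul]
    | monomial n k =>
      rw [Polynomial.aeval_monomial, Polynomial.aeval_monomial]
      have hmul : (algebraMap K (Module.End K A) k * T ^ n) a₀ = k • ((T ^ n) a₀) := by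
        rw [Module.End.mul_apply, Module.algebraMap_end_apply]
      rw [hmul, SetLike.val_smul, Algebra.smul_def, hTn n]
      ring
  have hz : Polynomial.aeval c' p * x₀ = 0 := by
    rw [← hpow p]
    have : Polynomial.aeval T p = 0 := by
      exact hpT
    rw [this]
    simp
  have hcp : Polynomial.aeval c' p = 0 := by
    rcases mul_eq_zero.mp hz with h' | h'
    · exact h'
    · exact absurd h' hx₀
  obtain ⟨c, hc⟩ := aux_pt_alg hKL ⟨p, hpm.ne_zero, hcp⟩
  refine ⟨c, fun a => ?_⟩
  rw [hw a, hHG a, hGb a, ← hc]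
  ring
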